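/- Consider the two-player game Γ_1 with action sets {a1,a2} for player 1 and {b1,b2} for player 2, and payoffs (u_1,u_2): (a1,b1)↦(1,1), (a1,b2)↦(0,0), (a2,b1)↦(0,0), (a2,b2)↦(0,0). Then: (i) the pure profiles (a1,b1) and (a2,b2) are both Nash equilibria of Γ_1; (ii) in every weakly payoff monotone strategy profile σ for Γ_1, player 1 plays a1 with probability at least 1/2; and (iii) (a1,b1) is an empirical equilibrium of Γ_1 while (a2,b2) is not. -/

import Mathlib

open Filter Topology

section GameDefs

variable {N : Type} [Fintype N] [DecidableEq N] {A : N → Type}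
  [∀ i, Fintype (A i)] [∀ i, DecidableEq (A i)]

/-- A mixed-strategy profile: each `σ i` is a probability distribution on `A i`. -/
def IsStrategy (σ : ∀ i, A i → ℝ) : Prop :=
  (∀ i a, 0 ≤ σ i a) ∧ ∀ i, ∑ a, σ i a = 1

/-- An interior profile places positive probability on every action. -/
def Interior (σ : ∀ i, A i → ℝ) : Prop :=
  ∀ i a, 0 < σ i a

/-- Expected utility of player `i` at profile `σ`. -/
noncomputable def expUtil (u : ∀ i : N, (∀ j, A j) → ℝ) (σ : ∀ i, A i → ℝ) (i : N) : ℝ :=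
  ∑ a : ∀ j, A j, u i a * ∏ j, σ j (a j)

/-- Expected utility of player `i` from playing action `ai` against `σ₋ᵢ`. -/
noncomputable def devUtil (u : ∀ i : N, (∀ j, A j) → ℝ) (σ : ∀ i, A i → ℝ)
    (i : N) (ai : A i) : ℝ :=
  expUtil u (Function.update σ i (fun b => if b = ai then (1 : ℝ) else 0)) i

/-- Nash equilibrium. -/
def IsNash (u : ∀ i : N, (∀ j, A j) → ℝ) (σ : ∀ i, A i → ℝ) : Prop :=
  IsStrategy σ ∧ ∀ (i : N) (μ : A i → ℝ), (∀ a, 0 ≤ μ a) → (∑ a, μ a = 1) →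
    expUtil u (Function.update σ i μ) i ≤ expUtil u σ i

/-- Weak payoff monotonicity: differences in behavior reveal differences in payoffs. -/
def WeaklyPayoffMonotone (u : ∀ i : N, (∀ j, A j) → ℝ) (σ : ∀ i, A i → ℝ) : Prop :=
  IsStrategy σ ∧ ∀ (i : N) (ai bi : A i), σ i bi < σ i ai →
    devUtil u σ i bi < devUtil u σ i ai

/-- Payoff monotonicity. -/
def PayoffMonotone (u : ∀ i : N, (∀ j, A j) → ℝ) (σ : ∀ i, A i → ℝ) : Prop :=
  IsStrategy σ ∧ ∀ (i : N) (ai bi : A i),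
    σ i bi ≤ σ i ai ↔ devUtil u σ i bi ≤ devUtil u σ i ai

/-- Pointwise convergence of a sequence of profiles. -/
def ConvergesTo (s : ℕ → ∀ i, A i → ℝ) (σ : ∀ i, A i → ℝ) : Prop :=
  ∀ (i : N) (ai : A i), Tendsto (fun n => s n i ai) atTop (𝓝 (σ i ai))

/-- Empirical equilibrium: a Nash equilibrium that is the limit of weakly payoff
monotone profiles. -/
def IsEmpirical (u : ∀ i : N, (∀ j, A j) → ℝ) (σ : ∀ i, A i → ℝ) : Prop :=
  IsNash u σ ∧ ∃ s : ℕ → ∀ i, A i → ℝ,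
    (∀ n, WeaklyPayoffMonotone u (s n)) ∧ ConvergesTo s σ

/-- Proper equilibrium (Myerson). -/
def IsProper (u : ∀ i : N, (∀ j, A j) → ℝ) (σ : ∀ i, A i → ℝ) : Prop :=
  IsStrategy σ ∧ ∃ s : ℕ → ∀ i, A i → ℝ,
    (∀ n, IsStrategy (s n) ∧ Interior (s n) ∧
      ∀ (i : N) (ai bi : A i),
        devUtil u (s n) i bi < devUtil u (s n) i ai →
          s n i bi ≤ (1 / (n + 1) : ℝ) * s n i ai) ∧
    ConvergesTo s σ

/-- Perfect equilibrium (Selten, in Myerson's formulation). -/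
def IsPerfect (u : ∀ i : N, (∀ j, A j) → ℝ) (σ : ∀ i, A i → ℝ) : Prop :=
  IsStrategy σ ∧ ∃ s : ℕ → ∀ i, A i → ℝ,
    (∀ n, IsStrategy (s n) ∧ Interior (s n) ∧
      ∀ (i : N) (ai : A i), (1 / (n + 1) : ℝ) < s n i ai →
        ∀ bi : A i, devUtil u (s n) i bi ≤ devUtil u (s n) i ai) ∧
    ConvergesTo s σ

/-- `bi` weakly dominates `ai` for player `i`. -/
def WeaklyDominates (u : ∀ i : N, (∀ j, A j) → ℝ) (i : N) (bi ai : A i) : Prop :=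
  (∀ a : ∀ j, A j, u i (Function.update a i ai) ≤ u i (Function.update a i bi)) ∧
  ∃ a : ∀ j, A j, u i (Function.update a i ai) < u i (Function.update a i bi)

/-- Undominated Nash equilibrium. -/
def IsUndominatedNash (u : ∀ i : N, (∀ j, A j) → ℝ) (σ : ∀ i, A i → ℝ) : Prop :=
  IsNash u σ ∧ ∀ (i : N) (ai : A i), 0 < σ i ai →
    ¬ ∃ bi : A i, WeaklyDominates u i bi ai

end GameDefs

/-- A regular quantal response function on a finite set of actions `B`:
interiority, continuity, responsiveness, and monotonicity. -/
def IsRegularQRF {B : Type} [Fintype B] [DecidableEq B]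
    (p : (B → ℝ) → (B → ℝ)) : Prop :=
  (∀ x, (∀ a, 0 < p x a) ∧ ∑ a, p x a = 1) ∧
  Continuous p ∧
  (∀ (x : B → ℝ) (η : ℝ) (a : B), 0 < η →
    p x a < p (Function.update x a (x a + η)) a) ∧
  ∀ (x : B → ℝ) (a b : B), x b < x a → p x b < p x a

section QREDefs

variable {N : Type} [Fintype N] [DecidableEq N] {A : N → Type}
  [∀ i, Fintype (A i)] [∀ i, DecidableEq (A i)]

/-- Quantal response equilibrium with respect to a profile of QRFs `p`. -/
def IsQRE (u : ∀ i : N, (∀ j, A j) → ℝ) (p : ∀ i, (A i → ℝ) → (A i → ℝ))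
    (σ : ∀ i, A i → ℝ) : Prop :=
  ∀ i : N, σ i = p i (fun ai => devUtil u σ i ai)

/-- A sequence of profiles of QRFs is utility maximizing in the limit. -/
def UtilityMaximizingInLimit (u : ∀ i : N, (∀ j, A j) → ℝ)
    (p : ℕ → ∀ i, (A i → ℝ) → (A i → ℝ)) : Prop :=
  ∀ (s : ℕ → ∀ i, A i → ℝ) (σ : ∀ i, A i → ℝ),
    (∀ n, IsQRE u (p n) (s n)) → ConvergesTo s σ → IsNash u σ

/-- `σ` is approachable by regular QRE that are utility maximizing in the limit. -/
def ApproachableByRegularQRE (u : ∀ i : N, (∀ j, A j) → ℝ) (σ : ∀ i, A i → ℝ) : Prop :=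
  ∃ p : ℕ → ∀ i, (A i → ℝ) → (A i → ℝ),
    (∀ n i, IsRegularQRF (p n i)) ∧ UtilityMaximizingInLimit u p ∧
    ∃ s : ℕ → ∀ i, A i → ℝ, (∀ n, IsQRE u (p n) (s n)) ∧ ConvergesTo s σ

end QREDefs

/-- A control cost function (van Damme), bundled with its derivative on `(0,1]`. -/
structure ControlCost where
  f : ℝ → ℝ
  f' : ℝ → ℝ
  hasDeriv : ∀ x ∈ Set.Ioc (0:ℝ) 1, HasDerivWithinAt f (f' x) (Set.Ioc (0:ℝ) 1) x
  contDeriv : ContinuousOn f' (Set.Ioc (0:ℝ) 1)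
  anti : StrictAntiOn f (Set.Ioc (0:ℝ) 1)
  convex : StrictConvexOn ℝ (Set.Ioc (0:ℝ) 1) f
  atOne : f 1 = 0
  blowup : Tendsto f (nhdsWithin 0 (Set.Ioi (0:ℝ))) atTop

/-- The game Γ₁ of Example 1: both players get 1 at (a1,b1) and 0 otherwise.
Player `0` is player 1 (actions `0 = a1`, `1 = a2`); player `1` is player 2
(actions `0 = b1`, `1 = b2`). -/
noncomputable def uGammaOne : ∀ _ : Fin 2, (Fin 2 → Fin 2) → ℝ := fun _ a =>
  ![![(1:ℝ), 0], ![0, 0]] (a 0) (a 1)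

/-- The pure profile in which each player `i` plays `x i` with certainty. -/
noncomputable def purePr2 (x : Fin 2 → Fin 2) : ∀ _ : Fin 2, Fin 2 → ℝ :=
  fun i b => if b = x i then 1 else 0


lemma expUtil_gamma (σ : ∀ _ : Fin 2, Fin 2 → ℝ) (i : Fin 2) :
    expUtil uGammaOne σ i = σ 0 0 * σ 1 0 := by
  unfold expUtil uGammaOne
  rw [← (piFinTwoEquiv fun _ => Fin 2).symm.sum_comp]
  simp [Fintype.sum_prod_type, Fin.sum_univ_two, Fin.prod_univ_two, Fin.sum_univ_succ]

lemma devUtil_gamma0 (σ : ∀ _ : Fin 2, Fin 2 → ℝ) (a : Fin 2) :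
    devUtil uGammaOne σ 0 a = (if (0 : Fin 2) = a then 1 else 0) * σ 1 0 := by
  unfold devUtil
  rw [expUtil_gamma]
  simp [Function.update]

lemma devUtil_gamma1 (σ : ∀ _ : Fin 2, Fin 2 → ℝ) (a : Fin 2) :
    devUtil uGammaOne σ 1 a = σ 0 0 * (if (0 : Fin 2) = a then 1 else 0) := by
  unfold devUtil
  rw [expUtil_gamma]
  simp [Function.update]

lemma wpm_half (σ : ∀ _ : Fin 2, Fin 2 → ℝ)
    (h : WeaklyPayoffMonotone uGammaOne σ) : 1 / 2 ≤ σ 0 0 := by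
  obtain ⟨⟨hnn, hsum⟩, hmono⟩ := h
  by_contra hlt
  push_neg at hlt
  have hsum0 := hsum 0
  rw [Fin.sum_univ_two] at hsum0
  have h01 : σ 0 0 < σ 0 1 := by linarith
  have := hmono 0 1 0 h01
  rw [devUtil_gamma0, devUtil_gamma0] at this
  simp at this
  exact absurd (hnn 1 0) (not_le.mpr this)

/-- in Γ₁, (a1,b1) and (a2,b2) are Nash equilibria, every weakly payoff
monotone profile has player 1 playing a1 with probability at least 1/2, and (a1,b1)
is an empirical equilibrium while (a2,b2) is not. -/
theorem gammaOne_empirical_analysis :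
    (IsNash uGammaOne (purePr2 ![0, 0]) ∧ IsNash uGammaOne (purePr2 ![1, 1])) ∧
    (∀ σ : ∀ _ : Fin 2, Fin 2 → ℝ,
      WeaklyPayoffMonotone uGammaOne σ → 1 / 2 ≤ σ 0 0) ∧
    (IsEmpirical uGammaOne (purePr2 ![0, 0]) ∧
      ¬ IsEmpirical uGammaOne (purePr2 ![1, 1])) := by
  have hpure00 : ∀ i b : Fin 2, purePr2 ![0, 0] i b = if b = 0 then 1 else 0 := by
    intro i b; fin_cases i <;> rfl
  have hpure11 : ∀ i b : Fin 2, purePr2 ![1, 1] i b = if b = 1 then 1 else 0 := by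
    intro i b; fin_cases i <;> rfl
  have hN00 : IsNash uGammaOne (purePr2 ![0, 0]) := by
    refine ⟨⟨fun i a => ?_, fun i => ?_⟩, fun i μ hμ0 hμ1 => ?_⟩
    · rw [hpure00]; positivity
    · rw [Fin.sum_univ_two, hpure00, hpure00]; norm_num
    · rw [Fin.sum_univ_two] at hμ1
      rw [expUtil_gamma, expUtil_gamma]
      fin_cases i <;>
        simp [Function.update, hpure00] <;>
        nlinarith [hμ0 0, hμ0 1]
  have hN11 : IsNash uGammaOne (purePr2 ![1, 1]) := by
    refine ⟨⟨fun i a => ?_, fun i => ?_⟩, fun i μ hμ0 hμ1 => ?_⟩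
    · rw [hpure11]; positivity
    · rw [Fin.sum_univ_two, hpure11, hpure11]; norm_num
    · rw [expUtil_gamma, expUtil_gamma]
      fin_cases i <;> simp [Function.update, hpure11]
  refine ⟨⟨hN00, hN11⟩, wpm_half, ⟨hN00, ?_⟩, ?_⟩
  · -- (a1,b1) is empirical
    refine ⟨fun n _ b => if b = 0 then 1 - 1 / (n + 2 : ℝ) else 1 / (n + 2 : ℝ), fun n => ?_, ?_⟩
    · have hpos : (0 : ℝ) < 1 / (n + 2 : ℝ) := by positivity
      have hhalf : 1 / (n + 2 : ℝ) ≤ 1 / 2 := by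
        apply one_div_le_one_div_of_le
        · norm_num
        · push_cast; linarith [Nat.cast_nonneg (α := ℝ) n]
      refine ⟨⟨fun i a => ?_, fun i => ?_⟩, fun i ai bi hlt => ?_⟩
      · dsimp only; split <;> linarith
      · rw [Fin.sum_univ_two]; norm_num
      · have hpos' : (0:ℝ) < 1 / (n + 2 : ℝ) := hpos
        fin_cases i <;> fin_cases ai <;> fin_cases bi <;>
          simp_all [devUtil_gamma0, devUtil_gamma1] <;> linarith
    · intro i b
      have hz : Tendsto (fun n : ℕ => 1 / (n + 2 : ℝ)) atTop (𝓝 0) := by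
        have := Filter.Tendsto.comp (tendsto_one_div_add_atTop_nhds_zero_nat (𝕜 := ℝ))
          (tendsto_add_atTop_nat 1)
        convert this using 2 with n
        · simp [Function.comp]; push_cast; ring
      fin_cases b
      · rw [hpure00]
        simpa using Filter.Tendsto.const_sub 1 hz
      · rw [hpure00]
        simpa using hz
  · -- (a2,b2) is not empirical
    rintro ⟨-, s, hwpm, hconv⟩
    have hlim := hconv 0 0
    have h0 : purePr2 ![1, 1] 0 0 = 0 := by rw [hpure11]; norm_num
    rw [show (purePr2 ![1, 1]) 0 0 = (0:ℝ) from h0] at hlim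
    have : (1 / 2 : ℝ) ≤ 0 := ge_of_tendsto' hlim fun n => wpm_half _ (hwpm n)
    linarith
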